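/- Under the triad constraints b_k^{1|yz} + b_k^{y|1z} + b_k^{z|1y} = 0 and the divergence-free property of the full vector field R (each R_i does not depend on x_i), the Gaussian density f(x) = Z⁻¹ exp(−β(x₁² + Σ_k(y_k² + z_k²))) is invariant for the additive model: div(R f) = 0. -/

import Mathlib

open Finset

/-- Index type for the additive model: the resolved variable `x₁` together with the bath
variables `y_1,…,y_Λ, z_1,…,z_Λ`. -/
abbrev AddIdx (Λ : ℕ) := Unit ⊕ Fin Λ ⊕ Fin Λ

private lemma sq_proj_hasFDerivAt {ι : Type*} [Fintype ι] [DecidableEq ι] (x : ι → ℝ) (j : ι) :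
    HasFDerivAt (fun x : ι → ℝ => x j ^ 2)
      ((2 * x j) • (ContinuousLinearMap.proj j : (ι → ℝ) →L[ℝ] ℝ)) x := by
  have h := (ContinuousLinearMap.proj j : (ι → ℝ) →L[ℝ] ℝ).hasFDerivAt (x := x)
  have := h.mul h
  refine (this.congr_fderiv ?_).congr_of_eventuallyEq (Filter.Eventually.of_forall fun y => ?_)
  · ext v; simp; ring
  · simp [sq]

private lemma eval_diff {ι : Type*} [Fintype ι] [DecidableEq ι] (j : ι) :
    Differentiable ℝ (fun y : ι → ℝ => y j) :=
  (ContinuousLinearMap.proj j : (ι → ℝ) →L[ℝ] ℝ).differentiable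

/-- Under the triad constraints `b_k^{1|yz} + b_k^{y|1z} + b_k^{z|1y} = 0` and the
divergence-free property of the full vector field `R` (each `R_i` does not depend on
`x_i`), together with energy conservation of the Burgers bath, the Gaussian density
`f(x) = Z⁻¹ exp(−β(x₁² + Σ_k(y_k² + z_k²)))` is invariant for the additive model:
`div(R f) = 0`. -/
theorem additive_model_gaussian_invariant
    (Λ : ℕ) (lam β Z : ℝ) (hβ : 0 < β) (hZ : 0 < Z)
    (b1 bY bZ : Fin Λ → ℝ) (htriad : ∀ k, b1 k + bY k + bZ k = 0)
    (By Bz : (AddIdx Λ → ℝ) → Fin Λ → ℝ)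
    (hBd : ∀ k, Differentiable ℝ (fun x => By x k) ∧ Differentiable ℝ (fun x => Bz x k))
    (hbath : ∀ x : AddIdx Λ → ℝ,
      ∑ k, (x (.inr (.inl k)) * By x k + x (.inr (.inr k)) * Bz x k) = 0)
    (R : (AddIdx Λ → ℝ) → AddIdx Λ → ℝ)
    (hR : ∀ x : AddIdx Λ → ℝ,
      R x (.inl ()) = lam * ∑ k, b1 k * x (.inr (.inl k)) * x (.inr (.inr k))
      ∧ (∀ k, R x (.inr (.inl k)) = By x k + lam * bY k * x (.inl ()) * x (.inr (.inr k)))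
      ∧ (∀ k, R x (.inr (.inr k)) = Bz x k + lam * bZ k * x (.inl ()) * x (.inr (.inl k))))
    (hdivfree : ∀ (x : AddIdx Λ → ℝ) (i : AddIdx Λ),
      fderiv ℝ (fun y => R y i) x (Pi.single i 1) = 0)
    (f : (AddIdx Λ → ℝ) → ℝ)
    (hf : ∀ x, f x = Z⁻¹ * Real.exp (-β * ∑ i, x i ^ 2)) :
    ∀ x : AddIdx Λ → ℝ,
      ∑ i, fderiv ℝ (fun y => R y i * f y) x (Pi.single i 1) = 0 := by
  intro x
  -- differentiability of each component of R
  have hRdiff : ∀ i : AddIdx Λ, Differentiable ℝ (fun y => R y i) := by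
    intro i
    obtain ⟨⟩ | k | k := i
    · have he : (fun y => R y (.inl ()))
          = fun y => lam * ∑ k, b1 k * y (.inr (.inl k)) * y (.inr (.inr k)) :=
        funext fun y => (hR y).1
      rw [he]
      exact (Differentiable.fun_sum fun k _ =>
        (((eval_diff _).const_mul (b1 k)).mul (eval_diff _))).const_mul lam
    · have he : (fun y => R y (.inr (.inl k)))
          = fun y => By y k + lam * bY k * y (.inl ()) * y (.inr (.inr k)) :=
        funext fun y => (hR y).2.1 k
      rw [he]
      exact (hBd k).1.add (((eval_diff _).const_mul (lam * bY k)).mul (eval_diff _))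
    · have he : (fun y => R y (.inr (.inr k)))
          = fun y => Bz y k + lam * bZ k * y (.inl ()) * y (.inr (.inl k)) :=
        funext fun y => (hR y).2.2 k
      rw [he]
      exact (hBd k).2.add (((eval_diff _).const_mul (lam * bZ k)).mul (eval_diff _))
  -- derivative of the Gaussian density
  have hg : HasFDerivAt (fun y : AddIdx Λ → ℝ => ∑ j, y j ^ 2)
      (∑ j, (2 * x j) • (ContinuousLinearMap.proj j : (AddIdx Λ → ℝ) →L[ℝ] ℝ)) x :=
    HasFDerivAt.fun_sum fun j _ => sq_proj_hasFDerivAt x j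
  have hfe : f = fun y => Z⁻¹ * Real.exp (-β * ∑ j, y j ^ 2) := funext hf
  have hF : HasFDerivAt f
      (Z⁻¹ • ((Real.exp (-β * ∑ j, x j ^ 2)) •
        ((-β) • ∑ j, (2 * x j) • (ContinuousLinearMap.proj j : (AddIdx Λ → ℝ) →L[ℝ] ℝ)))) x := by
    rw [hfe]
    exact ((hg.const_mul (-β)).exp).const_mul Z⁻¹
  have hdf : ∀ i, fderiv ℝ f x (Pi.single i 1) = f x * (-(2 * β) * x i) := by
    intro i
    rw [hF.fderiv]
    simp only [ContinuousLinearMap.smul_apply, ContinuousLinearMap.sum_apply,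
      ContinuousLinearMap.proj_apply, Pi.single_apply, smul_eq_mul, mul_ite, mul_one, mul_zero,
      Finset.sum_ite_eq', Finset.mem_univ, if_true]
    rw [hf x]
    ring
  -- product rule
  have hprod : ∀ i, fderiv ℝ (fun y => R y i * f y) x (Pi.single i 1)
      = R x i * (f x * (-(2 * β) * x i)) := by
    intro i
    rw [fderiv_fun_mul ((hRdiff i).differentiableAt) hF.differentiableAt]
    simp only [ContinuousLinearMap.add_apply, ContinuousLinearMap.smul_apply, smul_eq_mul]
    rw [hdivfree x i, hdf i]
    ring
  -- energy conservation: ∑ x i * R x i = 0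
  have hS : ∑ i, x i * R x i = 0 := by
    obtain ⟨e1, e2, e3⟩ := hR x
    have hsplit : (∑ i, x i * R x i)
        = x (.inl ()) * R x (.inl ())
          + ∑ k, x (.inr (.inl k)) * R x (.inr (.inl k))
          + ∑ k, x (.inr (.inr k)) * R x (.inr (.inr k)) := by
      simp [Fintype.sum_sum_type, add_assoc]
    have hmain : (∑ i, x i * R x i)
        = (∑ k, (x (.inr (.inl k)) * By x k + x (.inr (.inr k)) * Bz x k))
          + ∑ k, lam * x (.inl ()) *
              ((b1 k + bY k + bZ k) * (x (.inr (.inl k)) * x (.inr (.inr k)))) := by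
      rw [hsplit, e1, Finset.mul_sum, Finset.mul_sum]
      simp only [e2, e3]
      simp only [← Finset.sum_add_distrib]
      apply Finset.sum_congr rfl
      intro k _
      ring
    rw [hmain, hbath x, zero_add]
    apply Finset.sum_eq_zero
    intro k _
    rw [htriad k]
    ring
  calc ∑ i, fderiv ℝ (fun y => R y i * f y) x (Pi.single i 1)
      = ∑ i, R x i * (f x * (-(2 * β) * x i)) := Finset.sum_congr rfl fun i _ => hprod i
    _ = (f x * (-(2 * β))) * ∑ i, x i * R x i := by
        rw [Finset.mul_sum]; apply Finset.sum_congr rfl; intro i _; ring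
    _ = 0 := by rw [hS, mul_zero]
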